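/- Let g ∈ L²(ℝ^d) and let Λ ⊆ ℝ^d be a lattice with dual lattice Λ*. Let (c_λ) be a finitely supported complex sequence, Rg(t) = g(−t), and set f = Σ_{λ∈Λ} c_λ T_λ (Rg) and f_× = Σ_{λ∈Λ} conj(c_λ) T_λ (Rg). Then |V_g f(x, ω)| = |V_g f_×(x, ω)| for all x ∈ ℝ^d and all ω ∈ Λ*. -/

import Mathlib

open MeasureTheory Real Matrix Finset

/-- The short-time Fourier transform `V_g f(x,ω) = ∫ f(t) conj(g(t−x)) e^{-2πi ω·t} dt`. -/
noncomputable def STFT {d : ℕ} (g f : (Fin d → ℝ) → ℂ) (x ω : Fin d → ℝ) : ℂ :=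
  ∫ t : Fin d → ℝ,
    f t * (starRingEnd ℂ) (g (t - x)) *
      Complex.exp (-(2 * π * Complex.I) * (∑ i, ω i * t i : ℝ))

private lemma norm_expi_neg (r : ℝ) : ‖Complex.exp (-(2 * π * Complex.I) * (r : ℝ))‖ = 1 := by
  rw [show (-(2 * π * Complex.I) * (r : ℝ)) = ((-(2 * π * r) : ℝ) : ℂ) * Complex.I by
    push_cast; ring]
  simpa using Complex.norm_exp_ofReal_mul_I (-(2 * π * r))

private lemma norm_expi_pos (r : ℝ) : ‖Complex.exp ((2 * π * Complex.I) * (r : ℝ))‖ = 1 := by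
  rw [show ((2 * π * Complex.I) * (r : ℝ)) = (((2 * π * r) : ℝ) : ℂ) * Complex.I by
    push_cast; ring]
  simpa using Complex.norm_exp_ofReal_mul_I (2 * π * r)

private lemma term_integrable {d : ℕ} {g : (Fin d → ℝ) → ℂ}
    (hg : MemLp g 2 (volume : Measure (Fin d → ℝ))) (a : ℂ) (lam x ω : Fin d → ℝ) :
    Integrable (fun t : Fin d → ℝ => a * g (lam - t) * (starRingEnd ℂ) (g (t - x)) *
      Complex.exp (-(2 * π * Complex.I) * (∑ i, ω i * t i : ℝ))) volume := by
  have h1 : MemLp (fun t : Fin d → ℝ => g (lam - t)) 2 volume :=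
    hg.comp_measurePreserving (Measure.measurePreserving_sub_left volume lam)
  have h2' : MemLp (fun t : Fin d → ℝ => g (t - x)) 2 volume :=
    hg.comp_measurePreserving (measurePreserving_sub_right volume x)
  have h2 : MemLp (fun t : Fin d → ℝ => (starRingEnd ℂ) (g (t - x))) 2 volume :=
    h2'.of_le (Complex.continuous_conj.comp_aestronglyMeasurable h2'.1)
      (Filter.Eventually.of_forall fun t => by simp)
  have hmul : Integrable (fun t : Fin d → ℝ =>
      g (lam - t) * (starRingEnd ℂ) (g (t - x))) volume :=
    memLp_one_iff_integrable.mp (h2.smul h1 (r := 1))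
  have heq : (fun t : Fin d → ℝ => a * g (lam - t) * (starRingEnd ℂ) (g (t - x)) *
      Complex.exp (-(2 * π * Complex.I) * (∑ i, ω i * t i : ℝ)))
      = fun t : Fin d → ℝ => (a * Complex.exp (-(2 * π * Complex.I) * (∑ i, ω i * t i : ℝ))) *
        (g (lam - t) * (starRingEnd ℂ) (g (t - x))) := by
    funext t; ring
  rw [heq]
  refine hmul.bdd_mul (c := ‖a‖) ?_ (Filter.Eventually.of_forall fun t => by rw [norm_mul, norm_expi_neg, mul_one])
  have : Continuous (fun t : Fin d → ℝ =>
      a * Complex.exp (-(2 * π * Complex.I) * (∑ i, ω i * t i : ℝ))) := by fun_prop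
  exact this.aestronglyMeasurable

private lemma term_conj {d : ℕ} (g : (Fin d → ℝ) → ℂ) (a : ℂ) (lam x ω : Fin d → ℝ)
    (n : ℤ) (hn : (∑ i, ω i * lam i) = (n : ℝ)) :
    (starRingEnd ℂ) (∫ t : Fin d → ℝ, a * g (lam - t) * (starRingEnd ℂ) (g (t - x)) *
        Complex.exp (-(2 * π * Complex.I) * (∑ i, ω i * t i : ℝ)))
      = Complex.exp ((2 * π * Complex.I) * (∑ i, ω i * x i : ℝ)) *
        ∫ t : Fin d → ℝ, (starRingEnd ℂ) a * g (lam - t) * (starRingEnd ℂ) (g (t - x)) *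
          Complex.exp (-(2 * π * Complex.I) * (∑ i, ω i * t i : ℝ)) := by
  rw [← integral_conj, ← integral_const_mul,
    ← integral_sub_left_eq_self (fun t : Fin d → ℝ => (starRingEnd ℂ)
      (a * g (lam - t) * (starRingEnd ℂ) (g (t - x)) *
        Complex.exp (-(2 * π * Complex.I) * (∑ i, ω i * t i : ℝ)))) volume (x + lam)]
  congr 1
  funext t
  have e1 : lam - (x + lam - t) = t - x := by abel
  have e2 : (x + lam - t) - x = lam - t := by abel
  have e3 : (∑ i, ω i * (x + lam - t) i)
      = (∑ i, ω i * x i) + (n : ℝ) - (∑ i, ω i * t i) := by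
    rw [← hn, ← Finset.sum_add_distrib, ← Finset.sum_sub_distrib]
    exact Finset.sum_congr rfl fun i _ => by simp [Pi.add_apply, Pi.sub_apply]; ring
  simp only [e1, e2, e3, _root_.map_mul, Complex.conj_conj]
  rw [← Complex.exp_conj]
  rw [show (starRingEnd ℂ) (-(2 * π * Complex.I) *
        (((∑ i, ω i * x i) + (n : ℝ) - (∑ i, ω i * t i) : ℝ) : ℂ))
      = (2 * π * Complex.I) * ((∑ i, ω i * x i : ℝ) : ℂ) + (n : ℂ) * (2 * π * Complex.I)
        + (-(2 * π * Complex.I)) * ((∑ i, ω i * t i : ℝ) : ℂ) by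
    simp only [_root_.map_mul, map_neg, Complex.conj_I, Complex.conj_ofReal, map_ofNat]
    push_cast
    ring]
  rw [Complex.exp_add, Complex.exp_add, Complex.exp_int_mul_two_pi_mul_I, mul_one]
  ring

/-- Spectrogram equality on `ℝ^d × Λ*`: for `g ∈ L²(ℝ^d)`, a lattice `Λ = Aℤ^d` with dual
`Λ* = A^{-T}ℤ^d`, a finitely supported sequence `(c_λ)`, and the reflection `Rg = g(−·)`,
the functions `f = ∑_λ c_λ T_λ(Rg)` and `f_× = ∑_λ conj(c_λ) T_λ(Rg)` satisfy
`|V_g f(x,ω)| = |V_g f_×(x,ω)|` for all `x ∈ ℝ^d` and all `ω ∈ Λ*`. -/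
theorem stmt19 {d : ℕ} (A : Matrix (Fin d) (Fin d) ℝ) (hA : IsUnit A.det)
    (g : (Fin d → ℝ) → ℂ) (hg : MemLp g 2 (volume : Measure (Fin d → ℝ)))
    (c : (Fin d → ℤ) → ℂ) (hfin : (Function.support c).Finite)
    (x : Fin d → ℝ) (w : Fin d → ℤ) :
    ‖STFT g
        (fun t => ∑ z ∈ hfin.toFinset,
          c z * g (-(t - A.mulVec (fun i => (z i : ℝ)))))
        x ((Aᵀ)⁻¹.mulVec (fun i => (w i : ℝ)))‖ =
      ‖STFT g
        (fun t => ∑ z ∈ hfin.toFinset,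
          (starRingEnd ℂ) (c z) * g (-(t - A.mulVec (fun i => (z i : ℝ)))))
        x ((Aᵀ)⁻¹.mulVec (fun i => (w i : ℝ)))‖ := by
  set ω : Fin d → ℝ := (Aᵀ)⁻¹.mulVec (fun i => (w i : ℝ)) with hω
  have hdual : ∀ z : Fin d → ℤ,
      (∑ i, ω i * (A.mulVec (fun i => (z i : ℝ))) i) = ((∑ i, w i * z i : ℤ) : ℝ) := by
    intro z
    have h1 : ω ⬝ᵥ (A.mulVec (fun i => (z i : ℝ)))
        = (fun i => (w i : ℝ)) ⬝ᵥ (fun i => (z i : ℝ)) := by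
      rw [Matrix.dotProduct_mulVec, hω, ← Matrix.mulVec_transpose,
        Matrix.mulVec_mulVec, Matrix.mul_nonsing_inv _ (by simpa using hA),
        Matrix.one_mulVec]
    simpa [dotProduct] using h1.trans (by push_cast [dotProduct]; ring_nf)
  have expand : ∀ c' : (Fin d → ℤ) → ℂ,
      STFT g (fun t => ∑ z ∈ hfin.toFinset,
          c' z * g (-(t - A.mulVec (fun i => (z i : ℝ))))) x ω
      = ∑ z ∈ hfin.toFinset, ∫ t : Fin d → ℝ,
          c' z * g ((A.mulVec (fun i => (z i : ℝ))) - t) * (starRingEnd ℂ) (g (t - x)) *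
            Complex.exp (-(2 * π * Complex.I) * (∑ i, ω i * t i : ℝ)) := by
    intro c'
    rw [STFT, ← integral_finset_sum _
      (fun z _ => term_integrable hg (c' z) (A.mulVec (fun i => (z i : ℝ))) x ω)]
    congr 1
    funext t
    rw [Finset.sum_mul, Finset.sum_mul]
    exact Finset.sum_congr rfl fun z _ => by rw [neg_sub]
  rw [expand c, expand (fun z => (starRingEnd ℂ) (c z))]
  calc ‖∑ z ∈ hfin.toFinset, ∫ t : Fin d → ℝ,
        c z * g ((A.mulVec (fun i => (z i : ℝ))) - t) * (starRingEnd ℂ) (g (t - x)) *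
          Complex.exp (-(2 * π * Complex.I) * (∑ i, ω i * t i : ℝ))‖
      = ‖(starRingEnd ℂ) (∑ z ∈ hfin.toFinset, ∫ t : Fin d → ℝ,
          c z * g ((A.mulVec (fun i => (z i : ℝ))) - t) * (starRingEnd ℂ) (g (t - x)) *
            Complex.exp (-(2 * π * Complex.I) * (∑ i, ω i * t i : ℝ)))‖ :=
        (RCLike.norm_conj _).symm
    _ = ‖Complex.exp ((2 * π * Complex.I) * (∑ i, ω i * x i : ℝ)) *
          ∑ z ∈ hfin.toFinset, ∫ t : Fin d → ℝ,
            (starRingEnd ℂ) (c z) * g ((A.mulVec (fun i => (z i : ℝ))) - t) *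
              (starRingEnd ℂ) (g (t - x)) *
              Complex.exp (-(2 * π * Complex.I) * (∑ i, ω i * t i : ℝ))‖ := by
        rw [map_sum, Finset.mul_sum]
        congr 1
        exact Finset.sum_congr rfl fun z _ =>
          term_conj g (c z) (A.mulVec (fun i => (z i : ℝ))) x ω (∑ i, w i * z i) (hdual z)
    _ = ‖∑ z ∈ hfin.toFinset, ∫ t : Fin d → ℝ,
          (starRingEnd ℂ) (c z) * g ((A.mulVec (fun i => (z i : ℝ))) - t) *
            (starRingEnd ℂ) (g (t - x)) *
            Complex.exp (-(2 * π * Complex.I) * (∑ i, ω i * t i : ℝ))‖ := by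
        rw [norm_mul, norm_expi_pos, one_mul]
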